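/- For every complex number s with -1 < Re s < 0, the integral ∫₀^∞ z^{s-1} Ξ(z) dz (with z^{s-1} = exp((s-1)·log z) for real z > 0) converges absolutely and equals -(π/2) · Γ(s+1) / sin(πs/2), where Γ is the complex Gamma function. -/

import Mathlib

open MeasureTheory Set

noncomputable section

namespace SOSEX

/-- Spherical Bessel function of order one. -/
def j1 (z : ℝ) : ℝ := Real.sin z / z ^ 2 - Real.cos z / z

/-- `L(u) = log((u+1)/(u-1))`. -/
def Lfun (u : ℝ) : ℝ := Real.log ((u + 1) / (u - 1))

/-- `ℓ(u,v) = -log(u·v)`. -/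
def ell (u v : ℝ) : ℝ := -Real.log (u * v)

/-- The reduced geometric block `Φ(y)`. -/
def Phi (y : ℝ) : ℝ :=
  y * ∫ u in Ioi (1 : ℝ),
      Lfun u * ∫ v in Ioo (0 : ℝ) 1,
        ell u v * j1 ((u + v) * y / 2) * j1 ((u - v) * y / 2)

/-- The kernel `Ξ(z) = z ∫₀^∞ e^{-zt}/(1+t²) dt`. -/
def Xi (z : ℝ) : ℝ := z * ∫ t in Ioi (0 : ℝ), Real.exp (-z * t) / (1 + t ^ 2)

/-- `a₀ = 2 ∫₀^∞ j₁(t/2)²/t dt`. -/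
def a0 : ℝ := 2 * ∫ t in Ioi (0 : ℝ), (j1 (t / 2)) ^ 2 / t

/-- `b₀ = 2 ∫₀^∞ (j₁(t/2)²/t)(1 - log t) dt`. -/
def b0 : ℝ := 2 * ∫ t in Ioi (0 : ℝ), ((j1 (t / 2)) ^ 2 / t) * (1 - Real.log t)

/-- The Mellin kernel `𝒦(s) = -(π/2) Γ(s+1)/sin(πs/2)`. -/
def Kker (s : ℂ) : ℂ :=
  -((Real.pi : ℂ) / 2) * Complex.Gamma (s + 1) / Complex.sin ((Real.pi : ℂ) * s / 2)

end SOSEX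

open Complex

lemma cpow_pos_def {r : ℝ} (hr : 0 < r) (c : ℂ) :
    (r : ℂ) ^ c = Complex.exp (c * (Real.log r : ℂ)) := by
  rw [Complex.cpow_def_of_ne_zero (by exact_mod_cast hr.ne'), Complex.ofReal_log hr.le, mul_comm]

lemma ofReal_pos_eq_exp {r : ℝ} (hr : 0 < r) :
    (r : ℂ) = Complex.exp ((Real.log r : ℂ)) := by
  rw [← Complex.ofReal_exp, Real.exp_log hr]

/-- Mellin transform of `1/(1+u)`. -/
lemma mellin_inv_one_add {b : ℂ} (h0 : 0 < b.re) (h1 : b.re < 1) :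
    ∫ u in Ioi (0:ℝ), (u : ℂ) ^ (b - 1) * ((1 : ℂ) + (u : ℂ))⁻¹ =
      (Real.pi : ℂ) / Complex.sin ((Real.pi : ℂ) * b) := by
  have h1b : 0 < (1 - b).re := by simp [Complex.sub_re]; linarith
  -- change of variables u = x/(1-x), x ∈ (0,1)
  set f : ℝ → ℝ := fun x => x / (1 - x) with hf
  set f' : ℝ → ℝ := fun x => ((1 - x) ^ 2)⁻¹ with hf'
  have hder : ∀ x ∈ Ioo (0:ℝ) 1, HasDerivWithinAt f (f' x) (Ioo (0:ℝ) 1) x := by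
    intro x hx
    have h1x : (1:ℝ) - x ≠ 0 := by simp only [mem_Ioo] at hx; intro h; linarith [hx.2]
    have := (hasDerivAt_id x).div ((hasDerivAt_id x).const_sub 1) h1x
    convert this.hasDerivWithinAt using 1
    case e'_4 => rfl
    case e'_5 => rfl
    case e'_8 => rfl
    rw [hf']
    field_simp
    simp only [id]
    rw [sub_neg_eq_add, sub_add_cancel, mul_one, div_self (pow_ne_zero 2 h1x)]
  have hinj : InjOn f (Ioo (0:ℝ) 1) := by
    intro x hx y hy hxy
    simp only [mem_Ioo] at hx hy
    rw [hf] at hxy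
    have h1 : (1:ℝ) - x ≠ 0 := by intro h; linarith [hx.2]
    have h2 : (1:ℝ) - y ≠ 0 := by intro h; linarith [hy.2]
    field_simp at hxy
    linarith
  have himg : f '' Ioo (0:ℝ) 1 = Ioi (0:ℝ) := by
    ext y
    simp only [mem_image, mem_Ioo, mem_Ioi]
    constructor
    · rintro ⟨x, ⟨hx0, hx1⟩, rfl⟩
      exact div_pos hx0 (by linarith)
    · intro hy
      refine ⟨y / (1 + y), ⟨div_pos hy (by linarith), ?_⟩, ?_⟩
      · rw [div_lt_one (by linarith)]; linarith
      · have h1y : (1:ℝ) + y ≠ 0 := by positivity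
        have h2 : 1 - y / (1 + y) = (1 + y)⁻¹ := by field_simp; ring
        show y / (1 + y) / (1 - y / (1 + y)) = y
        rw [h2]
        field_simp
  have key := integral_image_eq_integral_abs_deriv_smul measurableSet_Ioo hder hinj
    (fun u : ℝ => (u : ℂ) ^ (b - 1) * ((1 : ℂ) + (u : ℂ))⁻¹)
  rw [himg] at key
  rw [key]
  have hcongr : ∀ x ∈ Ioo (0:ℝ) 1,
      |f' x| • ((f x : ℂ) ^ (b - 1) * ((1 : ℂ) + (f x : ℂ))⁻¹) =
        (x : ℂ) ^ (b - 1) * ((1 : ℂ) - (x : ℂ)) ^ ((1 - b) - 1) := by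
    intro x hx
    simp only [mem_Ioo] at hx
    obtain ⟨hx0, hx1⟩ := hx
    have h1x : (0:ℝ) < 1 - x := by linarith
    have hfx : 0 < f x := div_pos hx0 h1x
    set p : ℂ := (Real.log x : ℂ) with hp
    set q : ℂ := (Real.log (1 - x) : ℂ) with hq
    have e1 : ((f x : ℝ) : ℂ) ^ (b - 1) = Complex.exp ((b - 1) * (p - q)) := by
      rw [cpow_pos_def hfx, hf]
      simp only
      rw [Real.log_div hx0.ne' h1x.ne']
      push_cast
      ring_nf
      simp only [hp, hq]
    have e2 : ((1 : ℂ) + (f x : ℂ))⁻¹ = Complex.exp q := by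
      have : (1:ℝ) + f x = (1 - x)⁻¹ := by rw [hf]; field_simp; ring
      rw [show ((1:ℂ) + (f x : ℂ)) = ((1 + f x : ℝ) : ℂ) by push_cast; ring, this]
      rw [show (((1 - x)⁻¹ : ℝ) : ℂ) = ((1 - x : ℝ) : ℂ)⁻¹ by push_cast; ring]
      rw [ofReal_pos_eq_exp h1x, ← Complex.exp_neg, ← Complex.exp_neg, neg_neg]
    have e3 : ((|f' x| : ℝ) : ℂ) = Complex.exp (-2 * q) := by
      have : |f' x| = ((1 - x) ^ 2)⁻¹ := by rw [hf']; exact abs_of_pos (by positivity)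
      rw [this]
      push_cast
      rw [show (1 - (x:ℂ)) = ((1 - x : ℝ) : ℂ) by push_cast; ring]
      rw [ofReal_pos_eq_exp h1x, ← Complex.exp_nat_mul, ← Complex.exp_neg]
      congr 1
      push_cast
      ring
    have e4 : (x : ℂ) ^ (b - 1) = Complex.exp ((b - 1) * p) := cpow_pos_def hx0 _
    have e5 : ((1 : ℂ) - (x : ℂ)) ^ ((1 - b) - 1) = Complex.exp (((1 - b) - 1) * q) := by
      rw [show (1 : ℂ) - (x:ℂ) = ((1 - x : ℝ) : ℂ) by push_cast; ring]
      exact cpow_pos_def h1x _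
    rw [Complex.real_smul, e1, e2, e3, e4, e5, ← Complex.exp_add, ← Complex.exp_add,
      ← Complex.exp_add]
    ring_nf
  rw [setIntegral_congr_fun measurableSet_Ioo hcongr]
  have hbeta : ∫ x in Ioo (0:ℝ) 1, (x : ℂ) ^ (b - 1) * ((1:ℂ) - (x:ℂ)) ^ ((1 - b) - 1) =
      Complex.betaIntegral b (1 - b) := by
    rw [Complex.betaIntegral, intervalIntegral.integral_of_le zero_le_one,
      MeasureTheory.integral_Ioc_eq_integral_Ioo]
  rw [hbeta]
  have := Complex.Gamma_mul_Gamma_eq_betaIntegral h0 h1b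
  rw [add_sub_cancel, Complex.Gamma_one, one_mul] at this
  rw [← this, Complex.Gamma_mul_Gamma_one_sub]

/-- Mellin transform of `1/(1+t²)`. -/
lemma mellin_inv_one_add_sq {a : ℂ} (h0 : 0 < a.re) (h1 : a.re < 2) :
    ∫ t in Ioi (0:ℝ), (t : ℂ) ^ (a - 1) * ((1 : ℂ) + (t : ℂ) ^ 2)⁻¹ =
      (Real.pi : ℂ) / (2 * Complex.sin ((Real.pi : ℂ) * a / 2)) := by
  have hb0 : 0 < (a / 2).re := by
    rw [show a / 2 = a * (2⁻¹ : ℝ) by push_cast; ring, Complex.mul_re]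
    simp
    linarith
  have hb1 : (a / 2).re < 1 := by
    rw [show a / 2 = a * (2⁻¹ : ℝ) by push_cast; ring, Complex.mul_re]
    simp
    linarith
  have key := MeasureTheory.integral_comp_rpow_Ioi_of_pos
    (g := fun u : ℝ => (2 : ℝ)⁻¹ • ((u : ℂ) ^ (a / 2 - 1) * ((1 : ℂ) + (u : ℂ))⁻¹))
    (p := 2) two_pos
  have hcongr : ∀ x ∈ Ioi (0:ℝ),
      ((2 : ℝ) * x ^ ((2:ℝ) - 1)) •
          ((2 : ℝ)⁻¹ • (((x ^ (2:ℝ) : ℝ) : ℂ) ^ (a / 2 - 1) * ((1 : ℂ) + ((x ^ (2:ℝ) : ℝ) : ℂ))⁻¹)) =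
        (x : ℂ) ^ (a - 1) * ((1 : ℂ) + (x : ℂ) ^ 2)⁻¹ := by
    intro x hx
    rw [mem_Ioi] at hx
    have hx2 : x ^ (2:ℝ) = x ^ 2 := by
      rw [← Real.rpow_natCast x 2]; norm_num
    rw [hx2, smul_smul]
    have hr1 : (2 : ℝ) * x ^ ((2:ℝ) - 1) * (2:ℝ)⁻¹ = x := by
      rw [show (2:ℝ) - 1 = 1 by norm_num, Real.rpow_one]; ring
    rw [hr1]
    have hsq : 0 < x ^ 2 := by positivity
    have e1 : ((x ^ 2 : ℝ) : ℂ) ^ (a / 2 - 1) = Complex.exp ((a - 2) * (Real.log x : ℂ)) := by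
      rw [cpow_pos_def hsq, Real.log_pow]
      push_cast
      ring_nf
    have e2 : (x : ℂ) ^ (a - 1) = Complex.exp ((a - 1) * (Real.log x : ℂ)) := cpow_pos_def hx _
    rw [show ((1:ℂ) + ((x ^ 2 : ℝ) : ℂ))⁻¹ = ((1:ℂ) + (x:ℂ) ^ 2)⁻¹ by push_cast; ring_nf]
    rw [Complex.real_smul, ← mul_assoc]
    congr 1
    rw [e1, e2, ofReal_pos_eq_exp hx, ← Complex.exp_add]
    congr 1
    ring
  rw [setIntegral_congr_fun measurableSet_Ioi hcongr] at key
  rw [key, integral_smul, mellin_inv_one_add hb0 hb1]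
  rw [Complex.real_smul]
  push_cast
  rw [show (Real.pi : ℂ) * (a / 2) = (Real.pi : ℂ) * a / 2 by ring]
  have hS : ((Real.pi:ℂ) / (2 * Complex.sin ((Real.pi:ℂ) * a / 2))) =
      2⁻¹ * ((Real.pi:ℂ) * (Complex.sin ((Real.pi:ℂ) * a / 2))⁻¹) := by
    rw [div_eq_mul_inv, mul_inv]; ring
  rw [hS]
  rw [div_eq_mul_inv]


/-- For every complex `s` with `-1 < Re s < 0`, the integral
`∫₀^∞ z^{s-1} Ξ(z) dz` (with `z^{s-1} = exp((s-1)·log z)`) converges absolutely and equals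
`-(π/2)·Γ(s+1)/sin(πs/2)`. -/
theorem stmt0 (s : ℂ) (hs1 : -1 < s.re) (hs2 : s.re < 0) :
    IntegrableOn
      (fun z : ℝ => Complex.exp ((s - 1) * (Real.log z : ℂ)) * (SOSEX.Xi z : ℂ))
      (Ioi 0) volume ∧
    (∫ z in Ioi (0 : ℝ), Complex.exp ((s - 1) * (Real.log z : ℂ)) * (SOSEX.Xi z : ℂ)) =
      -((Real.pi : ℂ) / 2) * Complex.Gamma (s + 1) /
        Complex.sin ((Real.pi : ℂ) * s / 2) := by
  set σ := s.re with hσdef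
  set μ := volume.restrict (Ioi (0:ℝ)) with hμ
  set G : ℝ × ℝ → ℂ :=
    fun p => (p.2 : ℂ) ^ s * ((Real.exp (-(p.1 * p.2)) / (1 + p.1 ^ 2) : ℝ) : ℂ) with hG
  -- measurability of G
  have hGmeas : AEStronglyMeasurable G (μ.prod μ) := by
    rw [hμ, Measure.prod_restrict]
    refine ContinuousOn.aestronglyMeasurable ?_ (measurableSet_Ioi.prod measurableSet_Ioi)
    apply ContinuousOn.mul
    · intro p hp
      have hp2 : (0:ℝ) < p.2 := hp.2
      refine ContinuousAt.continuousWithinAt ?_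
      exact (continuousAt_ofReal_cpow_const p.2 s (Or.inr hp2.ne')).comp
        continuous_snd.continuousAt
    · refine Continuous.continuousOn ?_
      refine Complex.continuous_ofReal.comp ?_
      refine Continuous.div ?_ ?_ ?_
      · exact Real.continuous_exp.comp ((continuous_fst.mul continuous_snd).neg)
      · exact continuous_const.add ((continuous_fst).pow 2)
      · intro p; positivity
  -- norm of G
  have hnorm : ∀ t : ℝ, ∀ z ∈ Ioi (0:ℝ),
      ‖G (t, z)‖ = z ^ σ * (Real.exp (-(t * z)) / (1 + t ^ 2)) := by
    intro t z hz
    rw [hG]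
    simp only [norm_mul, Complex.norm_real, Real.norm_eq_abs,
      Complex.norm_cpow_eq_rpow_re_of_pos hz]
    rw [_root_.abs_of_nonneg (by positivity)]
  -- slice integrability in z
  have hbasez : ∀ t : ℝ, 0 < t → IntegrableOn (fun z : ℝ => z ^ σ * Real.exp (-(t * z))) (Ioi 0) := by
    intro t ht
    have := integrableOn_rpow_mul_exp_neg_mul_rpow (p := 1) hs1 one_pos ht
    refine this.congr_fun (fun z hz => ?_) measurableSet_Ioi
    dsimp only
    rw [Real.rpow_one, neg_mul]
  have hsliceAESM : ∀ t : ℝ, AEStronglyMeasurable (fun z => G (t, z)) μ := by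
    intro t
    rw [hμ]
    refine ContinuousOn.aestronglyMeasurable ?_ measurableSet_Ioi
    apply ContinuousOn.mul
    · intro z hz
      exact (continuousAt_ofReal_cpow_const z s (Or.inr (ne_of_gt hz))).continuousWithinAt
    · refine Continuous.continuousOn ?_
      exact Complex.continuous_ofReal.comp
        ((Real.continuous_exp.comp (continuous_const.mul continuous_id).neg).div_const _ :
          Continuous fun x : ℝ => Real.exp (-(t * x)) / (1 + t ^ 2))
  have hslice : ∀ t ∈ Ioi (0:ℝ), Integrable (fun z => G (t, z)) μ := by
    intro t ht
    rw [mem_Ioi] at ht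
    refine Integrable.mono' (hbasez t ht) (hsliceAESM t) ?_
    rw [hμ, ae_restrict_iff' measurableSet_Ioi]
    filter_upwards with z hz
    rw [hnorm t z hz]
    have h1 : Real.exp (-(t*z)) / (1 + t^2) ≤ Real.exp (-(t*z)) :=
      div_le_self (Real.exp_nonneg _) (by nlinarith)
    have h2 : (0:ℝ) ≤ z ^ σ := Real.rpow_nonneg (le_of_lt hz) _
    exact mul_le_mul_of_nonneg_left h1 h2
  -- value of the norm integral
  have hval : ∀ t ∈ Ioi (0:ℝ), (∫ z, ‖G (t, z)‖ ∂μ) =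
      Real.Gamma (σ + 1) * (t ^ (-(σ + 1)) / (1 + t ^ 2)) := by
    intro t ht
    rw [mem_Ioi] at ht
    rw [hμ]
    rw [setIntegral_congr_fun measurableSet_Ioi (fun z hz => hnorm t z hz)]
    have h1 : ∀ z ∈ Ioi (0:ℝ), z ^ σ * (Real.exp (-(t * z)) / (1 + t ^ 2)) =
        (1 + t ^ 2)⁻¹ * (z ^ ((σ + 1) - 1) * Real.exp (-(t * z))) := by
      intro z hz
      rw [add_sub_cancel_right]
      ring
    rw [setIntegral_congr_fun measurableSet_Ioi h1, MeasureTheory.integral_const_mul,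
      Real.integral_rpow_mul_exp_neg_mul_Ioi (by linarith) ht]
    rw [one_div, Real.inv_rpow ht.le, ← Real.rpow_neg ht.le]
    ring
  -- integrability of the majorant in t
  have hH : IntegrableOn (fun t : ℝ => Real.Gamma (σ + 1) * (t ^ (-(σ + 1)) / (1 + t ^ 2)))
      (Ioi 0) := by
    apply Integrable.const_mul
    have hsplit : Ioi (0:ℝ) = Ioc 0 1 ∪ Ioi 1 := (Ioc_union_Ioi_eq_Ioi zero_le_one).symm
    rw [hsplit]
    have hcont : ∀ x ∈ {t : ℝ | 0 < t}, ContinuousWithinAt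
        (fun t : ℝ => t ^ (-(σ + 1)) / (1 + t ^ 2)) {t : ℝ | 0 < t} x := by
      intro x hx
      apply ContinuousWithinAt.div
      · exact (Real.continuousAt_rpow_const x _ (Or.inl (ne_of_gt hx))).continuousWithinAt
      · exact (continuous_const.add (continuous_id.pow 2)).continuousWithinAt
      · positivity
    apply MeasureTheory.IntegrableOn.union
    · have hbase : IntegrableOn (fun t : ℝ => t ^ (-(σ + 1))) (Ioc (0:ℝ) 1) := by
        rw [← intervalIntegrable_iff_integrableOn_Ioc_of_le zero_le_one]
        exact intervalIntegral.intervalIntegrable_rpow' (by linarith)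
      refine Integrable.mono' hbase ?_ ?_
      · refine ContinuousOn.aestronglyMeasurable ?_ measurableSet_Ioc
        intro x hx
        exact (hcont x hx.1).mono (fun y hy => hy.1)
      · rw [ae_restrict_iff' measurableSet_Ioc]
        filter_upwards with t ht
        have h0t : (0:ℝ) ≤ t := ht.1.le
        rw [Real.norm_eq_abs, _root_.abs_of_nonneg
          (div_nonneg (Real.rpow_nonneg h0t _) (by positivity))]
        exact div_le_self (Real.rpow_nonneg h0t _) (by nlinarith [sq_nonneg t])
    · have hbase : IntegrableOn (fun t : ℝ => t ^ (-(σ + 1) - 2)) (Ioi (1:ℝ)) :=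
        integrableOn_Ioi_rpow_of_lt (by linarith) one_pos
      refine Integrable.mono' hbase ?_ ?_
      · refine ContinuousOn.aestronglyMeasurable ?_ measurableSet_Ioi
        intro x hx
        exact (hcont x (by simp only [mem_setOf_eq]; linarith [mem_Ioi.mp hx])).mono
          (fun y hy => by simp only [mem_setOf_eq]; linarith [mem_Ioi.mp hy])
      · rw [ae_restrict_iff' measurableSet_Ioi]
        filter_upwards with t ht
        rw [mem_Ioi] at ht
        have ht0 : (0:ℝ) < t := by linarith
        rw [Real.norm_eq_abs, _root_.abs_of_nonneg (by positivity), Real.rpow_sub ht0]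
        have h2 : t ^ (2:ℝ) = t ^ 2 := by
          rw [← Real.rpow_natCast t 2]; norm_num
        rw [h2]
        apply div_le_div_of_nonneg_left (by positivity) (by positivity)
        nlinarith
  -- product integrability
  have hGint : Integrable G (μ.prod μ) := by
    rw [MeasureTheory.integrable_prod_iff hGmeas]
    constructor
    · rw [hμ]
      exact (ae_restrict_mem measurableSet_Ioi).mono fun t ht => hslice t ht
    · refine Integrable.congr hH ?_
      rw [hμ]
      exact (ae_restrict_mem measurableSet_Ioi).mono fun t ht => (hval t ht).symm
  -- identification of the integrand with the inner integral
  have hfz : ∀ z ∈ Ioi (0:ℝ),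
      Complex.exp ((s - 1) * (Real.log z : ℂ)) * (SOSEX.Xi z : ℂ) = ∫ t, G (t, z) ∂μ := by
    intro z hz
    rw [mem_Ioi] at hz
    have e1 : (∫ t, G (t, z) ∂μ) =
        (z : ℂ) ^ s * ((∫ t in Ioi (0:ℝ), Real.exp (-(t * z)) / (1 + t ^ 2) : ℝ) : ℂ) := by
      rw [hμ, hG]
      simp only
      rw [MeasureTheory.integral_const_mul]
      congr 1
      exact integral_ofReal
    rw [e1]
    have e2 : (∫ t in Ioi (0:ℝ), Real.exp (-(t * z)) / (1 + t ^ 2)) =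
        ∫ t in Ioi (0:ℝ), Real.exp (-z * t) / (1 + t ^ 2) := by
      refine setIntegral_congr_fun measurableSet_Ioi (fun t ht => ?_)
      rw [neg_mul, mul_comm]
    rw [e2, SOSEX.Xi]
    push_cast
    rw [show (z:ℂ) ^ s = Complex.exp ((s - 1) * (Real.log z : ℂ)) * (z : ℂ) by
      rw [cpow_pos_def hz, ofReal_pos_eq_exp hz, ← Complex.exp_add]; congr 1; ring]
    ring
  constructor
  · have h1 : Integrable (fun z => ∫ t, G (t, z) ∂μ) μ := hGint.integral_prod_right
    refine Integrable.congr h1 ?_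
    rw [hμ]
    exact (ae_restrict_mem measurableSet_Ioi).mono fun z hz => (hfz z hz).symm
  · rw [setIntegral_congr_fun measurableSet_Ioi hfz]
    have hswap : (∫ z in Ioi (0:ℝ), ∫ t, G (t, z) ∂μ) = ∫ t, ∫ z, G (t, z) ∂μ ∂μ := by
      rw [hμ]
      exact (MeasureTheory.integral_integral_swap (f := fun t z => G (t, z)) hGint).symm
    rw [hswap]
    -- inner integral in z
    have hinner : ∀ t ∈ Ioi (0:ℝ), (∫ z, G (t, z) ∂μ) =
        Complex.Gamma (s + 1) * ((t : ℂ) ^ (-s - 1) * ((1:ℂ) + (t:ℂ) ^ 2)⁻¹) := by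
      intro t ht
      rw [mem_Ioi] at ht
      have h1 : ∀ z ∈ Ioi (0:ℝ), G (t, z) =
          ((1 + t ^ 2 : ℝ) : ℂ)⁻¹ * ((z : ℂ) ^ ((s + 1) - 1) * Complex.exp (-((t:ℂ) * (z:ℂ)))) := by
        intro z hz
        rw [hG]
        simp only [add_sub_cancel_right]
        push_cast
        ring
      rw [hμ, setIntegral_congr_fun measurableSet_Ioi h1, MeasureTheory.integral_const_mul,
        Complex.integral_cpow_mul_exp_neg_mul_Ioi (by simp [Complex.add_re]; linarith) ht]
      have h2 : ((1:ℂ) / (t:ℂ)) ^ (s + 1) = (t : ℂ) ^ (-s - 1) := by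
        rw [one_div, Complex.inv_cpow _ _ (by
          rw [Complex.arg_ofReal_of_nonneg ht.le]; exact Real.pi_ne_zero.symm),
          ← Complex.cpow_neg]
        congr 1
        ring
      rw [h2]
      push_cast
      ring
    rw [setIntegral_congr_fun measurableSet_Ioi hinner, MeasureTheory.integral_const_mul]
    have hmellin := mellin_inv_one_add_sq (a := -s)
      (by simp only [Complex.neg_re]; linarith) (by simp only [Complex.neg_re]; linarith)
    rw [hmellin]
    rw [show (Real.pi:ℂ) * -s / 2 = -((Real.pi:ℂ) * s / 2) by ring, Complex.sin_neg]
    rw [div_eq_mul_inv, div_eq_mul_inv, mul_inv, inv_neg]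
    ring
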